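/- Let n, d be positive integers, ε > 0, and 0 ≤ δ ≤ 1. Suppose f : {0,1}^n → ℝ^d is (ε,δ)-concentrated at some μ ∈ ℝ^d. Define g : {0,1}^n → ℝ^d by g(X)_j = 2εm + ε where m is the unique integer with f(X)_j ∈ [2εm, 2ε(m+1)). Let X be uniform on {0,1}^n. Then the Shannon entropy of g(X), namely H(g(X)) = ∑_y Pr[g(X) = y]·log₂(1/Pr[g(X) = y]) (the sum ranging over the finitely many values y of g, with the convention 0·log₂(1/0) = 0), satisfies H(g(X)) ≤ δ·n + d + 1. -/

import Mathlib

open Classical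

/-- Probability of `P` under the uniform distribution on a finite type. -/
noncomputable def pr {α : Type*} [Fintype α] (P : α → Prop) : ℝ :=
  ((Finset.univ.filter P).card : ℝ) / (Fintype.card α : ℝ)

/-- `f : {0,1}^n → ℝ^d` is `(ε,δ)`-concentrated at `μ`. -/
def Concentrated (n d : ℕ) (ε δ : ℝ)
    (f : (Fin n → Bool) → Fin d → ℝ) (μ : Fin d → ℝ) : Prop :=
  pr (fun X : Fin n → Bool => ∃ j, |f X j - μ j| > ε) ≤ δ

/-- Rounds `x` to the midpoint of the half-open interval `[L·m, L·(m+1))` containing it;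
for `L = 2ε` this is `2εm + ε` where `x ∈ [2εm, 2ε(m+1))`. -/
noncomputable def roundMid (L x : ℝ) : ℝ := L * ⌊x / L⌋ + L / 2


lemma sum_negMulLog_le {β : Type*} (S : Finset β) (p : β → ℝ) (hp : ∀ y ∈ S, 0 ≤ p y) :
    ∑ y ∈ S, Real.negMulLog (p y) ≤
      Real.negMulLog (∑ y ∈ S, p y) + (∑ y ∈ S, p y) * Real.log S.card := by
  rcases S.eq_empty_or_nonempty with rfl | hne
  · simp
  set q := ∑ y ∈ S, p y with hq
  set c : ℝ := (S.card : ℝ) with hc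
  have hc0 : (0:ℝ) < c := by
    simp only [hc]
    exact_mod_cast Finset.card_pos.mpr hne
  by_cases hq0 : q = 0
  · have hsum0 : ∑ y ∈ S, p y = 0 := by rw [← hq]; exact hq0
    have hall : ∀ y ∈ S, p y = 0 := (Finset.sum_eq_zero_iff_of_nonneg hp).mp hsum0
    have : ∑ y ∈ S, Real.negMulLog (p y) = 0 := by
      apply Finset.sum_eq_zero
      intro y hy; rw [hall y hy]; simp
    rw [this, hq0]; simp
  have jensen := Real.concaveOn_negMulLog.le_map_sum (t := S)
    (w := fun _ => c⁻¹) (p := p) (fun i _ => by positivity)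
    (by rw [Finset.sum_const, nsmul_eq_mul]; field_simp; rfl)
    (fun i hi => hp i hi)
  simp only [smul_eq_mul, ← Finset.mul_sum, ← hq] at jensen
  have step : ∑ y ∈ S, Real.negMulLog (p y) ≤ c * Real.negMulLog (c⁻¹ * q) := by
    have := mul_le_mul_of_nonneg_left jensen hc0.le
    calc ∑ y ∈ S, Real.negMulLog (p y)
        = c * (c⁻¹ * ∑ y ∈ S, Real.negMulLog (p y)) := by field_simp
      _ ≤ c * Real.negMulLog (c⁻¹ * q) := this
  refine step.trans (le_of_eq ?_)
  rw [Real.negMulLog, Real.negMulLog, Real.log_mul (inv_ne_zero hc0.ne') hq0, Real.log_inv]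
  field_simp
  ring

lemma term_eq (x : ℝ) : x * Real.logb 2 (1 / x) = Real.negMulLog x / Real.log 2 := by
  rw [Real.logb, one_div, Real.log_inv, Real.negMulLog]; ring

lemma entropy_sum_le {β : Type*} (S : Finset β) (p : β → ℝ) (hp : ∀ y ∈ S, 0 ≤ p y) :
    ∑ y ∈ S, p y * Real.logb 2 (1 / p y) ≤
      (∑ y ∈ S, p y) * Real.logb 2 (1 / (∑ y ∈ S, p y)) +
        (∑ y ∈ S, p y) * Real.logb 2 S.card := by
  have hlog2 : (0:ℝ) < Real.log 2 := Real.log_pos one_lt_two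
  have h1 : ∑ y ∈ S, p y * Real.logb 2 (1 / p y)
      = (∑ y ∈ S, Real.negMulLog (p y)) / Real.log 2 := by
    rw [Finset.sum_div]
    exact Finset.sum_congr rfl fun y _ => term_eq _
  have h2 : (∑ y ∈ S, p y) * Real.logb 2 (1 / (∑ y ∈ S, p y)) +
        (∑ y ∈ S, p y) * Real.logb 2 S.card
      = (Real.negMulLog (∑ y ∈ S, p y) + (∑ y ∈ S, p y) * Real.log S.card) / Real.log 2 := by
    rw [term_eq, Real.logb]; ring
  rw [h1, h2]
  gcongr
  exact sum_negMulLog_le S p hp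

lemma logb_card_nonneg {β : Type*} (S : Finset β) : 0 ≤ Real.logb 2 S.card := by
  rcases Nat.eq_zero_or_pos S.card with h | h
  · simp [h]
  · exact Real.logb_nonneg one_lt_two (by exact_mod_cast h)

lemma logb_card_le {β : Type*} (S : Finset β) (m : ℕ) (h : S.card ≤ 2 ^ m) :
    Real.logb 2 S.card ≤ m := by
  rcases Nat.eq_zero_or_pos S.card with h0 | h0
  · simp [h0]
  · calc Real.logb 2 S.card ≤ Real.logb 2 ((2:ℝ) ^ m) := by
          apply Real.logb_le_logb_of_le one_lt_two (by exact_mod_cast h0)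
          exact_mod_cast h
      _ = m := by rw [Real.logb_pow, Real.logb_self_eq_one one_lt_two]; ring

theorem aux (n d : ℕ) (ε δ : ℝ) (hε : 0 < ε) (hδ0 : 0 ≤ δ)
    (f : (Fin n → Bool) → Fin d → ℝ) (μ : Fin d → ℝ)
    (g : (Fin n → Bool) → Fin d → ℝ) (hgdef : ∀ X j, g X j = roundMid (2*ε) (f X j))
    (hf : pr (fun X : Fin n → Bool => ∃ j, |f X j - μ j| > ε) ≤ δ) :
    (∑ y ∈ Finset.univ.image g,
      pr (fun X => g X = y) * Real.logb 2 (1 / pr (fun X => g X = y))) ≤ δ * n + d + 1 := by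
  have h2ε : (0:ℝ) < 2 * ε := by linarith
  set Y : Finset (Fin d → ℝ) := Finset.univ.image g with hY
  set p : (Fin d → ℝ) → ℝ := fun y => pr (fun X => g X = y) with hp
  have hpnn : ∀ y, 0 ≤ p y := by
    intro y; rw [hp]; unfold pr; positivity
  set P : (Fin d → ℝ) → Prop := fun y => ∃ X, (∀ j, |f X j - μ j| ≤ ε) ∧ g X = y with hP
  set G : Finset (Fin d → ℝ) := Y.filter P with hG
  set B : Finset (Fin d → ℝ) := Y.filter (fun y => ¬ P y) with hB
  have hN : (0:ℝ) < (Fintype.card (Fin n → Bool) : ℝ) := by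
    exact_mod_cast Fintype.card_pos
  -- fiberwise sums
  have fib : ∀ T : Finset (Fin d → ℝ), ∑ y ∈ T, p y =
      ((Finset.univ.filter (fun X => g X ∈ T)).card : ℝ) / (Fintype.card (Fin n → Bool) : ℝ) := by
    intro T
    have hnat : (Finset.univ.filter (fun X => g X ∈ T)).card
        = ∑ y ∈ T, (Finset.univ.filter (fun X => g X = y)).card := by
      rw [Finset.card_eq_sum_card_fiberwise
        (f := g) (s := Finset.univ.filter (fun X => g X ∈ T)) (t := T) (fun x hx => (Finset.mem_filter.mp hx).2)]
      refine Finset.sum_congr rfl fun y hy => ?_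
      congr 1
      ext X
      simp only [Finset.mem_filter, Finset.mem_univ, true_and]
      constructor
      · rintro ⟨_, h⟩; exact h
      · intro h; exact ⟨by rw [h]; exact hy, h⟩
    simp only [hp]
    unfold pr
    rw [← Finset.sum_div]
    congr 1
    rw [hnat]
    push_cast
    exact Finset.sum_congr rfl fun y _ => by congr!
  have hsumY : ∑ y ∈ Y, p y = 1 := by
    rw [fib]
    have : Finset.univ.filter (fun X => g X ∈ Y) = Finset.univ := by
      apply Finset.filter_true_of_mem
      intro X _
      exact Finset.mem_image_of_mem g (Finset.mem_univ X)
    rw [this, Finset.card_univ, div_self hN.ne']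
  -- bad mass
  have hqB : ∑ y ∈ B, p y ≤ δ := by
    rw [fib]
    refine le_trans ?_ hf
    unfold pr
    have hsub : Finset.univ.filter (fun X => g X ∈ B)
        ⊆ Finset.univ.filter (fun X => ∃ j, |f X j - μ j| > ε) := by
      intro X hX
      simp only [Finset.mem_filter, Finset.mem_univ, true_and] at hX ⊢
      rw [hB, Finset.mem_filter] at hX
      obtain ⟨_, hnP⟩ := hX
      by_contra hcon
      push_neg at hcon
      exact hnP ⟨X, hcon, rfl⟩
    gcongr
    intro hx
    have h2 := hsub (Finset.mem_filter.mpr ⟨Finset.mem_univ X, hx⟩)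
    exact (Finset.mem_filter.mp h2).2
  -- |G| ≤ 2^d
  have hGcard : G.card ≤ 2 ^ d := by
    set m : Fin d → ℤ := fun j => ⌊(μ j - ε) / (2 * ε)⌋ with hm
    have hval : ∀ y ∈ G, ∀ j, y j = 2*ε*(m j) + ε ∨ y j = 2*ε*((m j : ℝ) + 1) + ε := by
      intro y hy j
      obtain ⟨X, hgood, hgx⟩ := (Finset.mem_filter.mp hy).2
      have habs := abs_le.mp (hgood j)
      have h1 : μ j - ε ≤ f X j := by linarith [habs.1]
      have h2 : f X j ≤ μ j + ε := by linarith [habs.2]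
      have ht1 : (μ j - ε)/(2*ε) ≤ f X j/(2*ε) := by gcongr
      have ht2 : f X j/(2*ε) ≤ (μ j - ε)/(2*ε) + 1 := by
        have e1 : f X j/(2*ε) ≤ (μ j + ε)/(2*ε) := by gcongr
        have e2 : (μ j + ε)/(2*ε) = (μ j - ε)/(2*ε) + 1 := by field_simp; ring
        linarith
      have hfl1 : m j ≤ ⌊f X j/(2*ε)⌋ := Int.floor_mono ht1
      have hfl2 : ⌊f X j/(2*ε)⌋ ≤ m j + 1 := by
        have := Int.floor_mono ht2
        rwa [Int.floor_add_one] at this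
      have hcase : ⌊f X j/(2*ε)⌋ = m j ∨ ⌊f X j/(2*ε)⌋ = m j + 1 := by omega
      have hyj : y j = 2*ε*(⌊f X j/(2*ε)⌋ : ℝ) + ε := by
        rw [← hgx, hgdef]
        rw [roundMid]
        ring
      rcases hcase with h | h
      · left; rw [hyj, h]
      · right; rw [hyj, h]; push_cast; ring
    have hinj : Set.InjOn (fun y : Fin d → ℝ => fun j => decide (y j = 2*ε*((m j : ℝ) + 1) + ε)) G := by
      intro y1 h1 y2 h2 heq
      funext j
      have e1 := hval y1 h1 j
      have e2 := hval y2 h2 j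
      have hne : (2*ε*(m j) + ε : ℝ) ≠ 2*ε*((m j : ℝ) + 1) + ε := by
        intro hcon; nlinarith
      have hj := congrFun heq j
      simp only [decide_eq_decide] at hj
      rcases e1 with a1 | a1 <;> rcases e2 with a2 | a2
      · rw [a1, a2]
      · exact absurd (a1.symm.trans (hj.mpr a2)) hne
      · exact absurd (a2.symm.trans (hj.mp a1)) hne
      · rw [a1, a2]
    calc G.card ≤ (Finset.univ : Finset (Fin d → Bool)).card :=
          Finset.card_le_card_of_injOn _ (fun y _ => Finset.mem_univ _) hinj
      _ = 2 ^ d := by simp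
  have hBcard : B.card ≤ 2 ^ n := by
    refine le_trans (Finset.card_le_card (Finset.filter_subset _ _)) ?_
    refine le_trans Finset.card_image_le ?_
    simp
  -- assemble
  have hsplit : ∀ F : (Fin d → ℝ) → ℝ, ∑ y ∈ Y, F y = ∑ y ∈ G, F y + ∑ y ∈ B, F y := by
    intro F
    rw [hG, hB]
    exact (Finset.sum_filter_add_sum_filter_not Y P F).symm
  set qG := ∑ y ∈ G, p y with hqGdef
  set qB := ∑ y ∈ B, p y with hqBdef
  have hQ : qG + qB = 1 := by rw [hqGdef, hqBdef, ← hsplit p]; exact hsumY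
  have hqB0 : 0 ≤ qB := Finset.sum_nonneg fun y _ => hpnn y
  have hqG0 : 0 ≤ qG := Finset.sum_nonneg fun y _ => hpnn y
  have hqG1 : qG ≤ 1 := by linarith
  have EG := entropy_sum_le G p (fun y _ => hpnn y)
  have EB := entropy_sum_le B p (fun y _ => hpnn y)
  have b1 : qG * Real.logb 2 G.card ≤ (d:ℝ) := by
    calc qG * Real.logb 2 G.card ≤ 1 * (d:ℝ) :=
          mul_le_mul hqG1 (by exact_mod_cast logb_card_le G d hGcard) (logb_card_nonneg G) zero_le_one
      _ = d := one_mul _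
  have b2 : qB * Real.logb 2 B.card ≤ δ * n := by
    calc qB * Real.logb 2 B.card ≤ qB * n :=
          mul_le_mul_of_nonneg_left (by exact_mod_cast logb_card_le B n hBcard) hqB0
      _ ≤ δ * n := mul_le_mul_of_nonneg_right hqB (Nat.cast_nonneg n)
  have b3 : qG * Real.logb 2 (1/qG) + qB * Real.logb 2 (1/qB) ≤ 1 := by
    have hbin := Real.binEntropy_le_log_two (p := qB)
    have hGeq : qG = 1 - qB := by linarith
    have hlog2 : (0:ℝ) < Real.log 2 := Real.log_pos one_lt_two
    rw [hGeq]
    have heq : (1 - qB) * Real.logb 2 (1/(1-qB)) + qB * Real.logb 2 (1/qB)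
        = Real.binEntropy qB / Real.log 2 := by
      rw [Real.binEntropy]
      simp only [Real.logb, one_div, Real.log_inv]
      ring
    rw [heq, div_le_one hlog2]
    exact hbin
  calc ∑ y ∈ Y, p y * Real.logb 2 (1 / p y)
      = ∑ y ∈ G, p y * Real.logb 2 (1 / p y) + ∑ y ∈ B, p y * Real.logb 2 (1 / p y) :=
        hsplit _
    _ ≤ (qG * Real.logb 2 (1/qG) + qG * Real.logb 2 G.card)
        + (qB * Real.logb 2 (1/qB) + qB * Real.logb 2 B.card) := add_le_add EG EB
    _ ≤ δ * n + d + 1 := by linarith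

/-- if `f : {0,1}^n → ℝ^d` is `(ε,δ)`-concentrated and `g` rounds each
coordinate of `f` to the midpoint of the length-`2ε` half-open interval containing it,
then the Shannon entropy of `g(X)` for uniform `X` is at most `δ·n + d + 1`. -/
theorem rounded_entropy_bound (n d : ℕ) (hn : 0 < n) (hd : 0 < d)
    (ε : ℝ) (hε : 0 < ε) (δ : ℝ) (hδ0 : 0 ≤ δ) (hδ1 : δ ≤ 1)
    (f : (Fin n → Bool) → Fin d → ℝ) (μ : Fin d → ℝ)
    (hf : Concentrated n d ε δ f μ) :
    (∑ y ∈ Finset.univ.image (fun X : Fin n → Bool => fun j : Fin d => roundMid (2 * ε) (f X j)),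
        pr (fun X : Fin n → Bool => (fun j : Fin d => roundMid (2 * ε) (f X j)) = y) *
          Real.logb 2 (1 / pr (fun X : Fin n → Bool => (fun j : Fin d => roundMid (2 * ε) (f X j)) = y)))
      ≤ δ * n + d + 1 := by
  exact aux n d ε δ hε hδ0 f μ _ (fun X j => rfl) hf
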